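/- Let $a^1 \leq \cdots \leq a^m$ and $b^1 \leq \cdots \leq b^d$ be integers with $m \geq d$ and $b^j \geq a^j$ for all $j$ (so there are no cycles). Let $h_1$ be the index of the first hole. Then $b^{h_1 - 1} \leq a^{h_1}$ (when $h_1 \geq 2$), i.e. the bottom-row entry immediately preceding the first hole does not exceed the first hole. -/

import Mathlib

/-! Common framework: two-row tableaux as pairs of (weakly increasing) lists of
integers, the greedy swapping procedure, the order-preserving rematching,
wall-crossing, and the charge-shift `Δ_e`.  Positions are 1-based. -/

/-- The entry of a list at 1-based position `i` (default `0` out of range). -/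
def ent (L : List ℤ) (i : ℕ) : ℤ := L.getD (i - 1) 0

/-- Greedy pick: the top-row position chosen for a bottom entry of value `x`,
given the set `used` of already used top positions: the maximal unused position
whose entry is `≤ x` if one exists, otherwise the maximal unused position
(a "cycle"). -/
def pickPos (A : List ℤ) (used : Finset ℕ) (x : ℤ) : ℕ :=
  let avail := (Finset.Icc 1 A.length) \ used
  let cand := avail.filter (fun i => ent A i ≤ x)
  if cand.Nonempty then WithBot.unbotD 0 cand.max else WithBot.unbotD 0 avail.max

/-- The set of used top-row positions after the first `j` steps of the greedy
swapping procedure (bottom entries processed in increasing order). -/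
def usedPos (A B : List ℤ) : ℕ → Finset ℕ
  | 0 => ∅
  | j + 1 => insert (pickPos A (usedPos A B j) (ent B (j + 1))) (usedPos A B j)

/-- `Spos A B j` is the top-row position greedily matched with bottom position `j`. -/
def Spos (A B : List ℤ) (j : ℕ) : ℕ := pickPos A (usedPos A B (j - 1)) (ent B j)

/-- No cycles occur: every bottom entry is matched with a top entry not exceeding it. -/
def NoCycles (A B : List ℤ) : Prop :=
  ∀ j, 1 ≤ j → j ≤ B.length → ent A (Spos A B j) ≤ ent B j

/-- The set of all matched (paired) top-row positions. -/
def matchedPos (A B : List ℤ) : Finset ℕ := usedPos A B B.length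

/-- The order-preserving rematching: `Mpos A B j` is the `j`-th smallest matched
top-row position, so `M(b^j) = a^{Mpos A B j}`. -/
def Mpos (A B : List ℤ) (j : ℕ) : ℕ :=
  ((matchedPos A B).sort (· ≤ ·)).getD (j - 1) 0

/-- A top-row position is a hole if it is in range and never matched. -/
def IsHole (A B : List ℤ) (i : ℕ) : Prop :=
  i ∈ Finset.Icc 1 A.length ∧ i ∉ matchedPos A B

/-- The top row after replacing each matched entry `M(b^j) = a^{i_j}` by `b^j`
(before re-sorting). -/
def swappedTop (A B : List ℤ) : List ℤ :=
  (List.range A.length).map (fun (t : ℕ) =>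
    if (t + 1) ∈ matchedPos A B then
      ent B ((((matchedPos A B).sort (· ≤ ·)).idxOf (t + 1)) + 1)
    else ent A (t + 1))

/-- The top row after wall-crossing: swapped and re-sorted into increasing order. -/
def wcTop (A B : List ℤ) : List ℤ := List.insertionSort (· ≤ ·) (swappedTop A B)

/-- The bottom row after wall-crossing: `j`-th entry is `a^{Mpos A B j}`. -/
def wcBot (A B : List ℤ) : List ℤ :=
  (List.range B.length).map (fun (t : ℕ) => ent A (Mpos A B (t + 1)))

/-- The charge shift `Δ_e` on the top row: prepend the `e` consecutive integers
starting at the smallest bottom entry, and add `e` to every old top entry. -/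
def deltaTop (e : ℕ) (A B : List ℤ) : List ℤ :=
  (List.range e).map (fun i => ent B 1 + (i : ℤ)) ++ A.map (· + (e : ℤ))

/-- Top row of the two-row tableau of the charged symmetric bipartition
`|(λ,λ), (0, e/2)⟩`, where `d ≥ e/2` satisfies `λ_{d+1-e/2} = λ_{d+1} = 0`. -/
def topInit (p : ℕ → ℕ) (e d : ℕ) : List ℤ :=
  (List.range (d + 1)).map (fun (t : ℕ) =>
    ((e / 2 : ℕ) : ℤ) - (d : ℤ) + (t : ℤ) + (Int.ofNat (p (d + 1 - t))))

/-- Bottom row of the two-row tableau of `|(λ,λ), (0, e/2)⟩`. -/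
def botInit (p : ℕ → ℕ) (e d : ℕ) : List ℤ :=
  (List.range (d + 1 - e / 2)).map (fun (t : ℕ) =>
    ((e / 2 : ℕ) : ℤ) - (d : ℤ) + (t : ℤ) + (Int.ofNat (p (d + 1 - e / 2 - t))))

/-- The iterated sequence of two-row tableaux: `tab p e d 0` is the tableau of
`|(λ,λ),(0,e/2)⟩` and `tab p e d (k+1) = Δ_e (wc (tab p e d k))`. -/
def tab (p : ℕ → ℕ) (e d : ℕ) : ℕ → List ℤ × List ℤ
  | 0 => (topInit p e d, botInit p e d)
  | k + 1 =>
    (deltaTop e (wcTop (tab p e d k).1 (tab p e d k).2) (wcBot (tab p e d k).1 (tab p e d k).2),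
      wcBot (tab p e d k).1 (tab p e d k).2)

private lemma max_unbot_mem {s : Finset ℕ} (h : s.Nonempty) : WithBot.unbotD 0 s.max ∈ s := by
  obtain ⟨v, hv⟩ := Finset.max_of_nonempty h
  rw [hv]
  simpa using Finset.mem_of_max hv

private lemma le_max_unbot {s : Finset ℕ} {a : ℕ} (h : a ∈ s) : a ≤ WithBot.unbotD 0 s.max := by
  obtain ⟨v, hv⟩ := Finset.max_of_nonempty ⟨a, h⟩
  have h2 := Finset.le_max h
  rw [hv] at h2 ⊢
  exact_mod_cast h2

private lemma pickPos_eq (A : List ℤ) (used : Finset ℕ) (x : ℤ) :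
    pickPos A used x =
      if (((Finset.Icc 1 A.length) \ used).filter (fun i => ent A i ≤ x)).Nonempty
      then WithBot.unbotD 0 (((Finset.Icc 1 A.length) \ used).filter (fun i => ent A i ≤ x)).max
      else WithBot.unbotD 0 (((Finset.Icc 1 A.length) \ used)).max := rfl

private lemma le_pickPos (A : List ℤ) (used : Finset ℕ) (x : ℤ) {i : ℕ}
    (hi : i ∈ ((Finset.Icc 1 A.length) \ used).filter (fun k => ent A k ≤ x)) :
    i ≤ pickPos A used x := by
  rw [pickPos_eq, if_pos ⟨i, hi⟩]
  exact le_max_unbot hi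

private lemma usedPos_mono (A B : List ℤ) : Monotone (usedPos A B) :=
  monotone_nat_of_le_succ (fun _ => Finset.subset_insert _ _)

private lemma ent_mono {L : List ℤ} (hL : List.Pairwise (· ≤ ·) L) {i j : ℕ}
    (h1 : 1 ≤ i) (h2 : i ≤ j) (h3 : j ≤ L.length) : ent L i ≤ ent L j := by
  have hi : i - 1 < L.length := by omega
  have hj : j - 1 < L.length := by omega
  rw [ent, ent, L.getD_eq_getElem 0 hi, L.getD_eq_getElem 0 hj]
  exact hL.rel_get_of_le (a := ⟨i - 1, hi⟩) (b := ⟨j - 1, hj⟩) (Fin.mk_le_mk.mpr (by omega))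

/-- under dominance (so no cycles occur), the bottom entry
immediately preceding the first hole `h₁` does not exceed it: `b^(h₁-1) ≤ a^(h₁)`. -/
theorem stmt8 (A B : List ℤ) (hA : List.Pairwise (· ≤ ·) A) (hB : List.Pairwise (· ≤ ·) B)
    (hlen : B.length ≤ A.length)
    (hdom : ∀ j, 1 ≤ j → j ≤ B.length → ent A j ≤ ent B j)
    (h1 : ℕ) (hh1 : IsHole A B h1)
    (hmin : ∀ i, 1 ≤ i → i < h1 → i ∈ matchedPos A B) :
    2 ≤ h1 → ent B (h1 - 1) ≤ ent A h1 := by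
  classical
  intro hh2
  set d := B.length with hd
  -- existence of an entering step for every matched position
  have hex : ∀ i, 1 ≤ i → i ≤ h1 - 1 → ∃ j, i ∈ usedPos A B j := by
    intro i hi1 hi2
    exact ⟨d, hmin i hi1 (by omega)⟩
  set step : ℕ → ℕ := fun i =>
    if h : ∃ j, i ∈ usedPos A B j then Nat.find h else 0 with hstepdef
  have key : ∀ i, 1 ≤ i → i ≤ h1 - 1 →
      1 ≤ step i ∧ step i ≤ d ∧
      pickPos A (usedPos A B (step i - 1)) (ent B (step i)) = i := by
    intro i hi1 hi2
    have hE := hex i hi1 hi2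
    have hs : step i = Nat.find hE := by simp [hstepdef, dif_pos hE]
    have hspec : i ∈ usedPos A B (step i) := by rw [hs]; exact Nat.find_spec hE
    have hpos : 1 ≤ step i := by
      rcases Nat.eq_zero_or_pos (step i) with h0 | h0
      · rw [h0] at hspec; simp [usedPos] at hspec
      · exact h0
    have hnot : i ∉ usedPos A B (step i - 1) := by
      rw [hs]
      exact Nat.find_min hE (by omega)
    have hle : step i ≤ d := by
      rw [hs]
      exact Nat.find_min' hE (hmin i hi1 (by omega))
    refine ⟨hpos, hle, ?_⟩
    obtain ⟨n, hn⟩ : ∃ n, step i = n + 1 := ⟨step i - 1, by omega⟩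
    rw [hn] at hspec
    have : usedPos A B (n + 1)
        = insert (pickPos A (usedPos A B n) (ent B (n + 1))) (usedPos A B n) := rfl
    rw [this, Finset.mem_insert] at hspec
    rcases hspec with h | h
    · rw [hn]; simp only [Nat.add_sub_cancel]; exact h.symm
    · exact absurd h (by rw [hn] at hnot; simpa using hnot)
  -- the image of the step function
  set T : Finset ℕ := (Finset.Icc 1 (h1 - 1)).image step with hT
  have hinj : Set.InjOn step (Finset.Icc 1 (h1 - 1)) := by
    intro x hx y hy hxy
    simp only [Finset.coe_Icc, Set.mem_Icc] at hx hy
    have kx := (key x hx.1 hx.2).2.2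
    have ky := (key y hy.1 hy.2).2.2
    rw [← kx, ← ky, hxy]
  have hcardT : T.card = h1 - 1 := by
    rw [hT, Finset.card_image_of_injOn hinj, Nat.card_Icc]; omega
  have hTne : T.Nonempty := by
    refine ⟨step 1, Finset.mem_image_of_mem _ ?_⟩
    simp [Finset.mem_Icc]; omega
  set j' : ℕ := WithBot.unbotD 0 T.max with hj'
  have hj'T : j' ∈ T := max_unbot_mem hTne
  obtain ⟨i', hi'mem, hi'⟩ := Finset.mem_image.mp hj'T
  rw [Finset.mem_Icc] at hi'mem
  obtain ⟨hi'1, hi'2⟩ := hi'mem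
  obtain ⟨hs1, hs2, hs3⟩ := key i' hi'1 hi'2
  rw [hi'] at hs1 hs2 hs3
  -- j' ≥ h1 - 1 since T ⊆ Icc 1 j'
  have hTsub : T ⊆ Finset.Icc 1 j' := by
    intro t ht
    obtain ⟨u, hu, hut⟩ := Finset.mem_image.mp ht
    rw [Finset.mem_Icc] at hu
    have := (key u hu.1 hu.2).1
    rw [Finset.mem_Icc]
    exact ⟨by omega, le_max_unbot ht⟩
  have hj'ge : h1 - 1 ≤ j' := by
    have := Finset.card_le_card hTsub
    rw [hcardT, Nat.card_Icc] at this
    omega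
  -- final argument
  by_contra hcon
  push_neg at hcon
  have hBle : ent B (h1 - 1) ≤ ent B j' := ent_mono hB (by omega) hj'ge hs2
  have hh1avail : h1 ∈ (Finset.Icc 1 A.length) \ usedPos A B (j' - 1) := by
    rw [Finset.mem_sdiff]
    refine ⟨hh1.1, fun hmem => hh1.2 ?_⟩
    exact usedPos_mono A B (show j' - 1 ≤ d by omega) hmem
  have hh1cand : h1 ∈ ((Finset.Icc 1 A.length) \ usedPos A B (j' - 1)).filter
      (fun k => ent A k ≤ ent B j') := by
    rw [Finset.mem_filter]
    exact ⟨hh1avail, le_of_lt (lt_of_lt_of_le hcon hBle)⟩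
  have := le_pickPos A (usedPos A B (j' - 1)) (ent B j') hh1cand
  rw [hs3] at this
  omega
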